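/- arXiv:2005.08190 — 2 statements merged into one kernel-verified Lean document; each statement's English description precedes it below -/
import Mathlib

section
/- Let i_T ≥ 1 and j_L ≥ 1, and let (i,j) satisfy i_T + 1 < i ≤ m and j_L + 1 < j ≤ n. Suppose a_{i′} = a_i for all i_T ≤ i′ ≤ i and b_{j′} = b_j for all j_L ≤ j′ ≤ j. Set s = j − j_L and t = i − i_T. Then D[i,j] = D[i_T + max(t − s, 0), j_L + max(s − t, 0)] + min(s, t) · (a_i − b_j)^2. -/
/-- The DTW dynamic programming table recurrence for sequences `a` (length `m`)
and `b` (length `n`), both indexed from 1. -/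
def DTWTable (a b : ℕ → ℝ) (m n : ℕ) (D : ℕ → ℕ → ℝ) : Prop :=
  D 1 1 = (a 1 - b 1) ^ 2 ∧
  (∀ i, 1 < i → i ≤ m → D i 1 = D (i - 1) 1 + (a i - b 1) ^ 2) ∧
  (∀ j, 1 < j → j ≤ n → D 1 j = D 1 (j - 1) + (a 1 - b j) ^ 2) ∧
  (∀ i j, 1 < i → i ≤ m → 1 < j → j ≤ n →
    D i j = min (min (D i (j - 1)) (D (i - 1) j)) (D (i - 1) (j - 1)) + (a i - b j) ^ 2)

/-- One horizontal step inequality: `D i j ≤ D i (j-1) + cost`. -/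
lemma dtw_step_right (a b : ℕ → ℝ) (m n : ℕ) (D : ℕ → ℕ → ℝ)
    (hD : DTWTable a b m n D) (i j : ℕ) (hi1 : 1 ≤ i) (hi2 : i ≤ m)
    (hj1 : 1 < j) (hj2 : j ≤ n) :
    D i j ≤ D i (j - 1) + (a i - b j) ^ 2 := by
  obtain ⟨h11, hr, hc, hrec⟩ := hD
  rcases eq_or_lt_of_le hi1 with h | h
  · rw [← h, hc j hj1 hj2]
  · rw [hrec i j h hi2 hj1 hj2]
    have : min (min (D i (j - 1)) (D (i - 1) j)) (D (i - 1) (j - 1)) ≤ D i (j - 1) :=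
      le_trans (min_le_left _ _) (min_le_left _ _)
    linarith

/-- One vertical step inequality: `D i j ≤ D (i-1) j + cost`. -/
lemma dtw_step_down (a b : ℕ → ℝ) (m n : ℕ) (D : ℕ → ℕ → ℝ)
    (hD : DTWTable a b m n D) (i j : ℕ) (hi1 : 1 < i) (hi2 : i ≤ m)
    (hj1 : 1 ≤ j) (hj2 : j ≤ n) :
    D i j ≤ D (i - 1) j + (a i - b j) ^ 2 := by
  obtain ⟨h11, hr, hc, hrec⟩ := hD
  rcases eq_or_lt_of_le hj1 with h | h
  · rw [← h, hr i hi1 hi2]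
  · rw [hrec i j hi1 hi2 h hj2]
    have : min (min (D i (j - 1)) (D (i - 1) j)) (D (i - 1) (j - 1)) ≤ D (i - 1) j :=
      le_trans (min_le_left _ _) (min_le_right _ _)
    linarith

/-- If two consecutive rows have equal `a`-values, the table is monotone between them. -/
lemma dtw_row_mono (a b : ℕ → ℝ) (m n : ℕ) (D : ℕ → ℕ → ℝ)
    (hD : DTWTable a b m n D) (i : ℕ) (hi1 : 1 < i) (hi2 : i ≤ m)
    (hA : a (i - 1) = a i) :
    ∀ j, 1 ≤ j → j ≤ n → D (i - 1) j ≤ D i j := by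
  intro j
  induction j with
  | zero => omega
  | succ k ih =>
    intro hj1 hj2
    rcases Nat.eq_or_lt_of_le hj1 with h | h
    · obtain ⟨h11, hr, hc, hrec⟩ := hD
      rw [← h, hr i hi1 hi2]
      have := sq_nonneg (a i - b 1)
      linarith
    · have hk1 : 1 ≤ k := by omega
      have hk2 : k ≤ n := by omega
      have ihk := ih hk1 hk2
      obtain ⟨h11, hr, hc, hrec⟩ := hD
      rw [hrec i (k + 1) hi1 hi2 h hj2]
      simp only [Nat.add_sub_cancel] at *
      have hstep : D (i - 1) (k + 1) ≤ D (i - 1) k + (a i - b (k + 1)) ^ 2 := by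
        have := dtw_step_right a b m n D ⟨h11, hr, hc, hrec⟩ (i - 1) (k + 1)
          (by omega) (by omega) (by omega) hj2
        simpa [Nat.add_sub_cancel, hA] using this
      have hc0 := sq_nonneg (a i - b (k + 1))
      have h1 : D (i - 1) (k + 1) ≤ D i k + (a i - b (k + 1)) ^ 2 := by linarith
      have h2 : D (i - 1) (k + 1) ≤ D (i - 1) (k + 1) + (a i - b (k + 1)) ^ 2 := by linarith
      have h3 : D (i - 1) (k + 1) ≤ D (i - 1) k + (a i - b (k + 1)) ^ 2 := hstep
      have : D (i - 1) (k + 1) ≤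
          min (min (D i k) (D (i - 1) (k + 1))) (D (i - 1) k) + (a i - b (k + 1)) ^ 2 := by
        rcases le_total (min (D i k) (D (i - 1) (k + 1))) (D (i - 1) k) with hmm | hmm
        · rw [min_eq_left hmm]
          rcases le_total (D i k) (D (i - 1) (k + 1)) with hmn | hmn
          · rw [min_eq_left hmn]; exact h1
          · rw [min_eq_right hmn]; exact h2
        · rw [min_eq_right hmm]; exact h3
      linarith
    
/-- If two consecutive columns have equal `b`-values, the table is monotone between them. -/
lemma dtw_col_mono (a b : ℕ → ℝ) (m n : ℕ) (D : ℕ → ℕ → ℝ)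
    (hD : DTWTable a b m n D) (j : ℕ) (hj1 : 1 < j) (hj2 : j ≤ n)
    (hB : b (j - 1) = b j) :
    ∀ i, 1 ≤ i → i ≤ m → D i (j - 1) ≤ D i j := by
  intro i
  induction i with
  | zero => omega
  | succ k ih =>
    intro hi1 hi2
    rcases Nat.eq_or_lt_of_le hi1 with h | h
    · obtain ⟨h11, hr, hc, hrec⟩ := hD
      rw [← h, hc j hj1 hj2]
      have := sq_nonneg (a 1 - b j)
      linarith
    · have hk1 : 1 ≤ k := by omega
      have hk2 : k ≤ m := by omega
      have ihk := ih hk1 hk2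
      obtain ⟨h11, hr, hc, hrec⟩ := hD
      rw [hrec (k + 1) j h hi2 hj1 hj2]
      simp only [Nat.add_sub_cancel] at *
      have hstep : D (k + 1) (j - 1) ≤ D k (j - 1) + (a (k + 1) - b j) ^ 2 := by
        have := dtw_step_down a b m n D ⟨h11, hr, hc, hrec⟩ (k + 1) (j - 1)
          h hi2 (by omega) (by omega)
        simpa [Nat.add_sub_cancel, hB] using this
      have hc0 := sq_nonneg (a (k + 1) - b j)
      have h1 : D (k + 1) (j - 1) ≤ D (k + 1) (j - 1) + (a (k + 1) - b j) ^ 2 := by linarith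
      have h2 : D (k + 1) (j - 1) ≤ D k j + (a (k + 1) - b j) ^ 2 := by linarith
      have h3 : D (k + 1) (j - 1) ≤ D k (j - 1) + (a (k + 1) - b j) ^ 2 := hstep
      have : D (k + 1) (j - 1) ≤
          min (min (D (k + 1) (j - 1)) (D k j)) (D k (j - 1)) + (a (k + 1) - b j) ^ 2 := by
        rcases le_total (min (D (k + 1) (j - 1)) (D k j)) (D k (j - 1)) with hmm | hmm
        · rw [min_eq_left hmm]
          rcases le_total (D (k + 1) (j - 1)) (D k j) with hmn | hmn
          · rw [min_eq_left hmn]; exact h1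
          · rw [min_eq_right hmn]; exact h2
        · rw [min_eq_right hmm]; exact h3
      linarith

theorem stmt_6 (a b : ℕ → ℝ) (m n : ℕ) (hm : 1 ≤ m) (hn : 1 ≤ n)
    (D : ℕ → ℕ → ℝ) (hD : DTWTable a b m n D)
    (iT jL i j : ℕ) (hiT : 1 ≤ iT) (hjL : 1 ≤ jL)
    (hi₁ : iT + 1 < i) (hi₂ : i ≤ m) (hj₁ : jL + 1 < j) (hj₂ : j ≤ n)
    (ha : ∀ i', iT ≤ i' → i' ≤ i → a i' = a i)
    (hb : ∀ j', jL ≤ j' → j' ≤ j → b j' = b j)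
    (s t : ℕ) (hs : s = j - jL) (ht : t = i - iT) :
    D i j = D (iT + (t - s)) (jL + (s - t)) + (min s t : ℕ) * (a i - b j) ^ 2 := by
  -- key diagonal step inside the block
  have key : ∀ i' j', iT + 1 ≤ i' → i' ≤ i → jL + 1 ≤ j' → j' ≤ j →
      D i' j' = D (i' - 1) (j' - 1) + (a i - b j) ^ 2 := by
    intro i' j' hi'1 hi'2 hj'1 hj'2
    have hA : a (i' - 1) = a i' := by
      rw [ha (i' - 1) (by omega) (by omega), ha i' (by omega) hi'2]
    have hB : b (j' - 1) = b j' := by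
      rw [hb (j' - 1) (by omega) (by omega), hb j' (by omega) hj'2]
    have hrowm := dtw_row_mono a b m n D hD i' (by omega) (by omega) hA (j' - 1)
      (by omega) (by omega)
    have hcolm := dtw_col_mono a b m n D hD j' (by omega) (by omega) hB (i' - 1)
      (by omega) (by omega)
    obtain ⟨h11, hr, hc, hrec⟩ := hD
    rw [hrec i' j' (by omega) (by omega) (by omega) (by omega)]
    rw [min_eq_right (le_min hrowm hcolm)]
    rw [ha i' (by omega) hi'2, hb j' (by omega) hj'2]
  -- iterate the diagonal step
  have iter : ∀ k, k ≤ min s t → D i j = D (i - k) (j - k) + (k : ℝ) * (a i - b j) ^ 2 := by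
    intro k
    induction k with
    | zero => intro _; simp
    | succ k ih =>
      intro hk
      have hk' : k ≤ min s t := by omega
      rw [ih hk']
      have hstep := key (i - k) (j - k) (by omega) (by omega) (by omega) (by omega)
      have e1 : i - k - 1 = i - (k + 1) := by omega
      have e2 : j - k - 1 = j - (k + 1) := by omega
      rw [hstep, e1, e2]
      push_cast
      ring
  have := iter (min s t) le_rfl
  have e1 : i - min s t = iT + (t - s) := by omega
  have e2 : j - min s t = jL + (s - t) := by omega
  rw [e1, e2] at this
  exact this
end

section
/- For every 2 ≤ j ≤ n−1 and every i with j < i ≤ m, one has (D[i,j+1] − D[i,j]) − (D′[i,j] − D′[i,j−1]) = (a_j − b_j)^2 − (a_j − b_{j+1})^2. -/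
noncomputable def lowF (a b : ℕ → ℝ) (i j : ℕ) : ℝ :=
  (∑ r ∈ Finset.Ico 1 j, (a r - b r) ^ 2) + ∑ r ∈ Finset.Icc j i, (a r - b j) ^ 2

noncomputable def upF (a b : ℕ → ℝ) (i j : ℕ) : ℝ :=
  (∑ s ∈ Finset.Ico 1 i, (a s - b s) ^ 2) + ∑ s ∈ Finset.Icc i j, (a i - b s) ^ 2

lemma sum_Icc_bot (f : ℕ → ℝ) {l i : ℕ} (h : l ≤ i) :
    ∑ r ∈ Finset.Icc l i, f r = f l + ∑ r ∈ Finset.Icc (l+1) i, f r := by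
  rw [← Finset.Ico_add_one_right_eq_Icc, ← Finset.Ico_add_one_right_eq_Icc]
  exact Finset.sum_eq_sum_Ico_succ_bot (Nat.lt_succ_of_le h) f

lemma dtw_closed (a b : ℕ → ℝ) (m n : ℕ) (D : ℕ → ℕ → ℝ) (hD : DTWTable a b m n D)
    (hA : ∀ i i', 1 ≤ i → i ≤ i' → i' ≤ m → a i' ≤ a i)
    (hB : ∀ j j', 1 ≤ j → j ≤ j' → j' ≤ n → b j ≤ b j')
    (hpos : ∀ i j, 1 ≤ i → i ≤ m → 1 ≤ j → j ≤ n → b j < a i) :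
    ∀ i j, 1 ≤ i → i ≤ m → 1 ≤ j → j ≤ n →
      (j ≤ i → D i j = lowF a b i j) ∧ (i ≤ j → D i j = upF a b i j) := by
  obtain ⟨h11, hcol1, hrow1, hrec⟩ := hD
  have hcr : ∀ i i' j, 1 ≤ i → i ≤ i' → i' ≤ m → 1 ≤ j → j ≤ n →
      (a i' - b j) ^ 2 ≤ (a i - b j) ^ 2 := by
    intro i i' j h1 h2 h3 h4 h5
    have hp : b j < a i' := hpos i' j (h1.trans h2) h3 h4 h5
    have ha : a i' ≤ a i := hA i i' h1 h2 h3
    nlinarith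
  have hcc : ∀ i j j', 1 ≤ i → i ≤ m → 1 ≤ j → j ≤ j' → j' ≤ n →
      (a i - b j') ^ 2 ≤ (a i - b j) ^ 2 := by
    intro i j j' h1 h2 h3 h4 h5
    have hp : b j' < a i := hpos i j' h1 h2 (h3.trans h4) h5
    have hb : b j ≤ b j' := hB j j' h3 h4 h5
    nlinarith
  suffices H : ∀ k i j, i + j ≤ k → 1 ≤ i → i ≤ m → 1 ≤ j → j ≤ n →
      (j ≤ i → D i j = lowF a b i j) ∧ (i ≤ j → D i j = upF a b i j) by
    intro i j h1 h2 h3 h4; exact H (i + j) i j le_rfl h1 h2 h3 h4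
  intro k
  induction k with
  | zero => intro i j hk h1; omega
  | succ k ih =>
    intro i j hk h1 h2 h3 h4
    by_cases hi1 : i = 1
    · subst hi1
      constructor
      · intro hji
        have : j = 1 := by omega
        subst this
        rw [h11]
        simp [lowF]
      · intro _
        by_cases hj1 : j = 1
        · subst hj1; rw [h11]; simp [upF]
        · obtain ⟨jp, rfl⟩ : ∃ jp, j = jp + 1 := ⟨j - 1, by omega⟩
          have hjp : 1 ≤ jp := by omega
          rw [hrow1 (jp+1) (by omega) h4]
          simp only [Nat.add_sub_cancel]
          have e := (ih 1 jp (by omega) le_rfl h2 hjp (by omega)).2 (by omega)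
          rw [e]
          simp only [upF]
          rw [Finset.sum_Icc_succ_top (by omega : 1 ≤ jp + 1)]
          ring
    · by_cases hj1 : j = 1
      · subst hj1
        obtain ⟨ip, rfl⟩ : ∃ ip, i = ip + 1 := ⟨i - 1, by omega⟩
        have hip : 1 ≤ ip := by omega
        constructor
        · intro _
          rw [hcol1 (ip+1) (by omega) h2]
          simp only [Nat.add_sub_cancel]
          have e := (ih ip 1 (by omega) hip (by omega) le_rfl h4).1 (by omega)
          rw [e]
          simp only [lowF]
          rw [Finset.sum_Icc_succ_top (by omega : 1 ≤ ip + 1)]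
          ring
        · intro h; omega
      · -- interior: i ≥ 2, j ≥ 2
        obtain ⟨ip, rfl⟩ : ∃ ip, i = ip + 1 := ⟨i - 1, by omega⟩
        obtain ⟨jp, rfl⟩ : ∃ jp, j = jp + 1 := ⟨j - 1, by omega⟩
        have hip : 1 ≤ ip := by omega
        have hjp : 1 ≤ jp := by omega
        have hrec' := hrec (ip+1) (jp+1) (by omega) h2 (by omega) h4
        simp only [Nat.add_sub_cancel] at hrec'
        rcases lt_trichotomy jp ip with hlt | heq | hgt
        · -- j < i : lower region
          have e1 : D (ip+1) jp = lowF a b (ip+1) jp :=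
            (ih (ip+1) jp (by omega) h1 h2 hjp (by omega)).1 (by omega)
          have e2 : D ip (jp+1) = lowF a b ip (jp+1) :=
            (ih ip (jp+1) (by omega) hip (by omega) h3 h4).1 (by omega)
          have e3 : D ip jp = lowF a b ip jp :=
            (ih ip jp (by omega) hip (by omega) hjp (by omega)).1 (by omega)
          have key1 : lowF a b ip (jp+1) ≤ lowF a b ip jp := by
            simp only [lowF]
            rw [Finset.sum_Ico_succ_top (by omega : 1 ≤ jp),
              sum_Icc_bot _ (by omega : jp ≤ ip)]
            have hs : ∑ r ∈ Finset.Icc (jp+1) ip, (a r - b (jp+1)) ^ 2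
                ≤ ∑ r ∈ Finset.Icc (jp+1) ip, (a r - b jp) ^ 2 := by
              apply Finset.sum_le_sum
              intro r hr
              rw [Finset.mem_Icc] at hr
              exact hcc r jp (jp+1) (by omega) (by omega) hjp (by omega) (by omega)
            linarith
          have elow : lowF a b (ip+1) jp = lowF a b ip jp + (a (ip+1) - b jp) ^ 2 := by
            simp only [lowF]
            rw [Finset.sum_Icc_succ_top (by omega : jp ≤ ip + 1)]
            ring
          have key2 : lowF a b ip (jp+1) ≤ lowF a b (ip+1) jp := by
            rw [elow]
            nlinarith [sq_nonneg (a (ip+1) - b jp)]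
          constructor
          · intro _
            rw [hrec', e1, e2, e3, min_eq_right key2, min_eq_left key1]
            simp only [lowF]
            rw [Finset.sum_Icc_succ_top (by omega : jp + 1 ≤ ip + 1)]
            ring
          · intro h; omega
        · -- diagonal
          subst heq
          have e1 : D (jp+1) jp = lowF a b (jp+1) jp :=
            (ih (jp+1) jp (by omega) h1 h2 hjp (by omega)).1 (by omega)
          have e2 : D jp (jp+1) = upF a b jp (jp+1) :=
            (ih jp (jp+1) (by omega) hjp (by omega) h3 h4).2 (by omega)
          have e3 : D jp jp = lowF a b jp jp :=
            (ih jp jp (by omega) hjp (by omega) hjp (by omega)).1 le_rfl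
          have equp : upF a b jp (jp+1) = lowF a b jp jp + (a jp - b (jp+1)) ^ 2 := by
            simp only [upF, lowF]
            rw [Finset.sum_Icc_succ_top (by omega : jp ≤ jp + 1)]
            simp only [Finset.Icc_self, Finset.sum_singleton]
            ring
          have elow : lowF a b (jp+1) jp = lowF a b jp jp + (a (jp+1) - b jp) ^ 2 := by
            simp only [lowF]
            rw [Finset.sum_Icc_succ_top (by omega : jp ≤ jp + 1)]
            ring
          have hmin : min (min (lowF a b (jp+1) jp) (upF a b jp (jp+1))) (lowF a b jp jp)
              = lowF a b jp jp := by
            apply min_eq_right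
            apply le_min
            · rw [elow]; nlinarith [sq_nonneg (a (jp+1) - b jp)]
            · rw [equp]; nlinarith [sq_nonneg (a jp - b (jp+1))]
          have hdiag : D (jp+1) (jp+1) = lowF a b jp jp + (a (jp+1) - b (jp+1)) ^ 2 := by
            rw [hrec', e1, e2, e3, hmin]
          constructor
          · intro _
            rw [hdiag]
            simp only [lowF]
            rw [Finset.sum_Ico_succ_top (by omega : 1 ≤ jp)]
            simp only [Finset.Icc_self, Finset.sum_singleton]
          · intro _
            rw [hdiag]
            simp only [lowF, upF]
            rw [Finset.sum_Ico_succ_top (by omega : 1 ≤ jp)]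
            simp only [Finset.Icc_self, Finset.sum_singleton]
        · -- i < j : upper region
          have e1 : D (ip+1) jp = upF a b (ip+1) jp :=
            (ih (ip+1) jp (by omega) h1 h2 hjp (by omega)).2 (by omega)
          have e2 : D ip (jp+1) = upF a b ip (jp+1) :=
            (ih ip (jp+1) (by omega) hip (by omega) h3 h4).2 (by omega)
          have e3 : D ip jp = upF a b ip jp :=
            (ih ip jp (by omega) hip (by omega) hjp (by omega)).2 (by omega)
          have key1 : upF a b (ip+1) jp ≤ upF a b ip jp := by
            simp only [upF]
            rw [Finset.sum_Ico_succ_top (by omega : 1 ≤ ip),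
              sum_Icc_bot _ (by omega : ip ≤ jp)]
            have hs : ∑ s ∈ Finset.Icc (ip+1) jp, (a (ip+1) - b s) ^ 2
                ≤ ∑ s ∈ Finset.Icc (ip+1) jp, (a ip - b s) ^ 2 := by
              apply Finset.sum_le_sum
              intro s hs
              rw [Finset.mem_Icc] at hs
              exact hcr ip (ip+1) s hip (by omega) h2 (by omega) (by omega)
            linarith
          have eup : upF a b ip (jp+1) = upF a b ip jp + (a ip - b (jp+1)) ^ 2 := by
            simp only [upF]
            rw [Finset.sum_Icc_succ_top (by omega : ip ≤ jp + 1)]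
            ring
          have key2 : upF a b (ip+1) jp ≤ upF a b ip (jp+1) := by
            rw [eup]
            nlinarith [sq_nonneg (a ip - b (jp+1))]
          constructor
          · intro h; omega
          · intro _
            rw [hrec', e1, e2, e3, min_eq_left key2, min_eq_left key1]
            simp only [upF]
            rw [Finset.sum_Icc_succ_top (by omega : ip + 1 ≤ jp + 1)]
            ring

theorem stmt_12 (a b : ℕ → ℝ) (m n : ℕ) (hm : 2 ≤ m) (hn : 3 ≤ n)
    (D D' : ℕ → ℕ → ℝ) (hD : DTWTable a b m n D)
    (hD' : DTWTable a (fun j => b (j + 1)) m (n - 1) D')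
    (hA : ∀ i, 1 ≤ i → i < m → a (i + 1) ≤ a i)
    (hB : ∀ j, 1 ≤ j → j < n → b j ≤ b (j + 1))
    (hAB : b n < a m) :
    ∀ j i, 2 ≤ j → j ≤ n - 1 → j < i → i ≤ m →
      (D i (j + 1) - D i j) - (D' i j - D' i (j - 1))
        = (a j - b j) ^ 2 - (a j - b (j + 1)) ^ 2 := by
  -- two-index monotonicity
  have hA2 : ∀ i', ∀ i, 1 ≤ i → i ≤ i' → i' ≤ m → a i' ≤ a i := by
    intro i'
    induction i' with
    | zero => intro i h1 h2 h3; omega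
    | succ k ihk =>
      intro i h1 h2 h3
      rcases Nat.eq_or_lt_of_le h2 with he | hl
      · subst he; exact le_rfl
      · calc a (k+1) ≤ a k := hA k (by omega) (by omega)
          _ ≤ a i := ihk i h1 (by omega) (by omega)
  have hB2 : ∀ j', ∀ j, 1 ≤ j → j ≤ j' → j' ≤ n → b j ≤ b j' := by
    intro j'
    induction j' with
    | zero => intro j h1 h2 h3; omega
    | succ k ihk =>
      intro j h1 h2 h3
      rcases Nat.eq_or_lt_of_le h2 with he | hl
      · subst he; exact le_rfl
      · calc b j ≤ b k := ihk j h1 (by omega) (by omega)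
          _ ≤ b (k+1) := hB k (by omega) (by omega)
  have hpos : ∀ i j, 1 ≤ i → i ≤ m → 1 ≤ j → j ≤ n → b j < a i := by
    intro i j h1 h2 h3 h4
    calc b j ≤ b n := hB2 n j h3 h4 le_rfl
      _ < a m := hAB
      _ ≤ a i := hA2 m i h1 h2 le_rfl
  have C := dtw_closed a b m n D hD (fun i i' h1 h2 h3 => hA2 i' i h1 h2 h3)
    (fun j j' h1 h2 h3 => hB2 j' j h1 h2 h3) hpos
  have C' := dtw_closed a (fun j => b (j+1)) m (n-1) D' hD'
    (fun i i' h1 h2 h3 => hA2 i' i h1 h2 h3)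
    (fun j j' h1 h2 h3 => hB2 (j'+1) (j+1) (by omega) (by omega) (by omega))
    (fun i j h1 h2 h3 h4 => hpos i (j+1) h1 h2 (by omega) (by omega))
  intro j i hj2 hjn hji him
  obtain ⟨jp, rfl⟩ : ∃ jp, j = jp + 1 := ⟨j - 1, by omega⟩
  have hjp : 1 ≤ jp := by omega
  simp only [Nat.add_sub_cancel]
  have E1 : D i (jp+1+1) = lowF a b i (jp+2) :=
    (C i (jp+2) (by omega) him (by omega) (by omega)).1 (by omega)
  have E2 : D i (jp+1) = lowF a b i (jp+1) :=
    (C i (jp+1) (by omega) him (by omega) (by omega)).1 (by omega)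
  have E3 : D' i (jp+1) = lowF a (fun s => b (s+1)) i (jp+1) :=
    (C' i (jp+1) (by omega) him (by omega) (by omega)).1 (by omega)
  have E4 : D' i jp = lowF a (fun s => b (s+1)) i jp :=
    (C' i jp (by omega) him hjp (by omega)).1 (by omega)
  rw [E1, E2, E3, E4]
  simp only [lowF]
  have s1 : ∑ r ∈ Finset.Ico 1 (jp+2), (a r - b r) ^ 2
      = (∑ r ∈ Finset.Ico 1 (jp+1), (a r - b r) ^ 2) + (a (jp+1) - b (jp+1)) ^ 2 :=
    Finset.sum_Ico_succ_top (by omega) _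
  have s3 : ∑ r ∈ Finset.Ico 1 (jp+1), (a r - b (r+1)) ^ 2
      = (∑ r ∈ Finset.Ico 1 jp, (a r - b (r+1)) ^ 2) + (a jp - b (jp+1)) ^ 2 :=
    Finset.sum_Ico_succ_top (by omega) _
  have s4 : ∑ r ∈ Finset.Icc jp i, (a r - b (jp+1)) ^ 2
      = (a jp - b (jp+1)) ^ 2 + ∑ r ∈ Finset.Icc (jp+1) i, (a r - b (jp+1)) ^ 2 :=
    sum_Icc_bot _ (by omega)
  have s5 : ∑ r ∈ Finset.Icc (jp+1) i, (a r - b (jp+2)) ^ 2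
      = (a (jp+1) - b (jp+2)) ^ 2 + ∑ r ∈ Finset.Icc (jp+2) i, (a r - b (jp+2)) ^ 2 :=
    sum_Icc_bot _ (by omega)
  have hb1 : (jp:ℕ) + 1 + 1 = jp + 2 := by omega
  rw [hb1, s1, s3, s4, s5]
  ring
end
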